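/- Let p ≥ 0 and B, C̃ > 0 be real numbers, let 0 < δ₀ ≤ 1/4, and let (h_k)_{k≥0} be a nonincreasing sequence of nonnegative reals such that for every k with h_k > 0 and every γ ∈ [0,1], h_{k+1} ≤ h_k − (γ/2)·h_k + (γ²/2)·C̃/(min(h_k/B, δ₀))^p. Then there exists a constant C > 0 (depending only on h₀, B, C̃, δ₀, and p) such that h_k ≤ C·(k+1)^{−1/(p+1)} for all k ≥ 0. -/

import Mathlib

/-- Sequence form of the global convergence theorem for the adaptive-δ Frank-Wolfe
variant (Theorem 2): from the master recurrence inequality one deduces the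
`O(k^{-1/(p+1)})` suboptimality rate. -/
theorem adaptive_delta_convergence_rate
    (p B Ct δ₀ : ℝ) (hp : 0 ≤ p) (hB : 0 < B) (hCt : 0 < Ct)
    (hδ₀ : 0 < δ₀) (hδ₀' : δ₀ ≤ 1 / 4)
    (h : ℕ → ℝ) (hnonneg : ∀ k, 0 ≤ h k) (hdecr : ∀ k, h (k + 1) ≤ h k)
    (hrec : ∀ k : ℕ, 0 < h k → ∀ γ ∈ Set.Icc (0 : ℝ) 1,
      h (k + 1) ≤ h k - γ / 2 * h k + γ ^ 2 / 2 * Ct / (min (h k / B) δ₀) ^ p) :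
    ∃ C > 0, ∀ k : ℕ, h k ≤ C * ((k : ℝ) + 1) ^ (-(1 / (p + 1))) := by
  have hp1 : (0:ℝ) < p + 1 := by linarith
  set α : ℝ := 1 / (p + 1) with hα_def
  have hα : 0 < α := by positivity
  have hα1 : α ≤ 1 := by
    rw [hα_def, div_le_one hp1]; linarith
  have hαp : α * p = 1 - α := by
    rw [hα_def]; field_simp; ring
  have hδp : (0:ℝ) < δ₀ ^ p := Real.rpow_pos_of_pos hδ₀ p
  set D : ℝ := Ct / δ₀ ^ p with hD_def
  have hD : 0 < D := by positivity
  set C : ℝ := max (max (3 * h 0 + 1) B) (8 * D) with hC_def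
  have hC0 : 0 < C := lt_of_lt_of_le (by positivity) (le_max_right _ _)
  have hCh0 : 3 * h 0 + 1 ≤ C := le_trans (le_max_left _ _) (le_max_left _ _)
  have hCB : B ≤ C := le_trans (le_max_right _ _) (le_max_left _ _)
  have hCD : 8 * D ≤ C := le_max_right _ _
  have hmono : ∀ k, h k ≤ h 0 := by
    intro k
    induction k with
    | zero => exact le_refl _
    | succ n ih => exact le_trans (hdecr n) ih
  -- small-index helper
  have small : ∀ j : ℕ, (j:ℝ) + 1 ≤ 3 → h j ≤ C * ((j:ℝ) + 1) ^ (-α) := by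
    intro j hj
    have hb : (1:ℝ) ≤ (j:ℝ) + 1 := by
      have : (0:ℝ) ≤ (j:ℝ) := Nat.cast_nonneg j
      linarith
    have h1 : ((j:ℝ)+1) ^ α ≤ (j:ℝ) + 1 := by
      calc ((j:ℝ)+1) ^ α ≤ ((j:ℝ)+1) ^ (1:ℝ) :=
            Real.rpow_le_rpow_of_exponent_le hb hα1
        _ = (j:ℝ) + 1 := Real.rpow_one _
    have hpow_pos : 0 < ((j:ℝ)+1) ^ α := Real.rpow_pos_of_pos (by linarith) α
    rw [Real.rpow_neg (by linarith : (0:ℝ) ≤ (j:ℝ)+1), ← div_eq_mul_inv,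
      le_div_iff₀ hpow_pos]
    have : h j * ((j:ℝ)+1) ^ α ≤ h 0 * 3 :=
      mul_le_mul (hmono j) (le_trans h1 hj) (le_of_lt hpow_pos) (hnonneg 0)
    linarith
  refine ⟨C, hC0, ?_⟩
  intro k
  induction k with
  | zero => exact small 0 (by norm_num)
  | succ k ih =>
    have hcast : ((k+1 : ℕ) : ℝ) + 1 = (k:ℝ) + 2 := by push_cast; ring
    rw [hcast]
    by_cases hk2 : k < 2
    · have hk1 : (k:ℝ) ≤ 1 := by exact_mod_cast Nat.lt_succ_iff.mp hk2
      have := small (k+1) (by rw [hcast]; linarith)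
      rwa [hcast] at this
    · push_neg at hk2
      have hK2 : (2:ℝ) ≤ (k:ℝ) := by exact_mod_cast hk2
      set K : ℝ := (k:ℝ) with hK_def
      set s : ℝ := K + 2 with hs_def
      have hs0 : 0 < s := by rw [hs_def]; linarith
      have hs1 : (1:ℝ) ≤ s := by rw [hs_def]; linarith
      have hK1pos : 0 < K + 1 := by linarith
      have ht : 0 < s ^ (-α) := Real.rpow_pos_of_pos hs0 _
      by_cases hcase : h k ≤ C * s ^ (-α)
      · exact le_trans (hdecr k) hcase
      · push_neg at hcase
        have hk_pos : 0 < h k := lt_trans (by positivity) hcase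
        set μ : ℝ := min (h k / B) δ₀ with hμ_def
        have hμpos : 0 < μ := lt_min (by positivity) hδ₀
        have hμp : 0 < μ ^ p := Real.rpow_pos_of_pos hμpos p
        set M : ℝ := Ct / μ ^ p with hM_def
        have hMpos : 0 < M := by positivity
        have htle1 : s ^ (-α) ≤ 1 :=
          Real.rpow_le_one_of_one_le_of_nonpos hs1 (by linarith)
        have hδ1 : δ₀ ≤ 1 := by linarith
        have hμlb : δ₀ * s ^ (-α) ≤ μ := by
          apply le_min
          · rw [le_div_iff₀ hB]
            have hδB : δ₀ * B ≤ C := by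
              calc δ₀ * B ≤ 1 * B := mul_le_mul_of_nonneg_right hδ1 hB.le
                _ = B := one_mul B
                _ ≤ C := hCB
            have := mul_le_mul_of_nonneg_right hδB ht.le
            nlinarith [this, hcase]
          · calc δ₀ * s ^ (-α) ≤ δ₀ * 1 :=
                mul_le_mul_of_nonneg_left htle1 hδ₀.le
              _ = δ₀ := mul_one δ₀
        have hMub : M ≤ D * s ^ (α * p) := by
          have h1 : (δ₀ * s ^ (-α)) ^ p ≤ μ ^ p :=
            Real.rpow_le_rpow (by positivity) hμlb hp
          have h2 : (δ₀ * s ^ (-α)) ^ p = δ₀ ^ p * s ^ (-(α * p)) := by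
            rw [Real.mul_rpow hδ₀.le ht.le, ← Real.rpow_mul hs0.le, neg_mul]
          rw [h2] at h1
          have hpos2 : 0 < δ₀ ^ p * s ^ (-(α * p)) := by positivity
          have h3 : M ≤ Ct / (δ₀ ^ p * s ^ (-(α * p))) := by
            rw [hM_def]; gcongr
          calc M ≤ Ct / (δ₀ ^ p * s ^ (-(α * p))) := h3
            _ = D * s ^ (α * p) := by
                rw [hD_def, Real.rpow_neg hs0.le]
                have hsp : 0 < s ^ (α * p) := Real.rpow_pos_of_pos hs0 _
                field_simp
        have e1 : s ^ (α * p) = s ^ (-α) * s := by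
          rw [hαp, show (1:ℝ) - α = -α + 1 by ring, Real.rpow_add hs0,
            Real.rpow_one]
        have hkey : 8 * M ≤ h k * s := by
          calc 8 * M ≤ 8 * (D * s ^ (α * p)) := by linarith
            _ = (8 * D) * (s ^ (-α) * s) := by rw [e1]; ring
            _ ≤ C * (s ^ (-α) * s) :=
                mul_le_mul_of_nonneg_right hCD (by positivity)
            _ = (C * s ^ (-α)) * s := by ring
            _ ≤ h k * s := mul_le_mul_of_nonneg_right hcase.le hs0.le
        by_cases hcmp : 2 * M ≤ h k
        · -- γ = 1
          have hr := hrec k hk_pos 1 ⟨zero_le_one, le_refl 1⟩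
          rw [← hμ_def] at hr
          have hrw : (1:ℝ) ^ 2 / 2 * Ct / μ ^ p = M / 2 := by
            rw [hM_def]; ring
          rw [hrw] at hr
          have h34 : h (k+1) ≤ 3/4 * h k := by linarith
          -- need (3/4) h k ≤ C * s^(-α)
          set A : ℝ := (K + 1) ^ α with hA_def
          set Bb : ℝ := s ^ α with hBb_def
          have hApos : 0 < A := Real.rpow_pos_of_pos hK1pos _
          have hBbpos : 0 < Bb := Real.rpow_pos_of_pos hs0 _
          have hle : Bb ≤ 4/3 * A := by
            have h1 : s ≤ 4/3 * (K + 1) := by rw [hs_def]; linarith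
            have h2 : Bb ≤ (4/3 * (K + 1)) ^ α :=
              Real.rpow_le_rpow hs0.le h1 hα.le
            have h3 : (4/3 * (K + 1) : ℝ) ^ α = (4/3 : ℝ) ^ α * A := by
              rw [hA_def, Real.mul_rpow (by norm_num) hK1pos.le]
            have h4 : ((4:ℝ)/3) ^ α ≤ 4/3 := by
              calc ((4:ℝ)/3) ^ α ≤ ((4:ℝ)/3) ^ (1:ℝ) :=
                    Real.rpow_le_rpow_of_exponent_le (by norm_num) hα1
                _ = 4/3 := Real.rpow_one _
            calc Bb ≤ (4/3 : ℝ) ^ α * A := h3 ▸ h2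
              _ ≤ 4/3 * A := mul_le_mul_of_nonneg_right h4 hApos.le
          have hinv : 3/4 * A⁻¹ ≤ Bb⁻¹ := by
            have := one_div_le_one_div_of_le hBbpos hle
            have heq : 1 / (4/3 * A) = 3/4 * A⁻¹ := by
              rw [one_div, mul_inv]; norm_num
            rw [heq, one_div] at this
            exact this
          have hihA : h k ≤ C * A⁻¹ := by
            rw [hA_def, ← Real.rpow_neg hK1pos.le]
            exact ih
          calc h (k+1) ≤ 3/4 * h k := h34
            _ ≤ 3/4 * (C * A⁻¹) :=
                mul_le_mul_of_nonneg_left hihA (by norm_num)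
            _ = C * (3/4 * A⁻¹) := by ring
            _ ≤ C * Bb⁻¹ := mul_le_mul_of_nonneg_left hinv hC0.le
            _ = C * s ^ (-α) := by rw [hBb_def, ← Real.rpow_neg hs0.le]
        · -- γ = h k / (2 M)
          push_neg at hcmp
          set γ : ℝ := h k / (2 * M) with hγ_def
          have hγ0 : 0 ≤ γ := by positivity
          have hγ1 : γ ≤ 1 := by
            rw [hγ_def, div_le_one (by linarith)]; linarith
          have hr := hrec k hk_pos γ ⟨hγ0, hγ1⟩
          rw [← hμ_def] at hr
          have e2 : γ / 2 * h k = h k ^ 2 / (4 * M) := by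
            rw [hγ_def]; field_simp; ring
          have e3 : γ ^ 2 / 2 * Ct / μ ^ p = h k ^ 2 / (8 * M) := by
            rw [hγ_def, hM_def]
            field_simp
            ring
          rw [e2, e3] at hr
          have hdiv : h k / s ≤ h k ^ 2 / (8 * M) := by
            rw [div_le_div_iff₀ hs0 (by linarith)]
            have h5 := mul_le_mul_of_nonneg_left hkey hk_pos.le
            linarith [h5]
          have step1 : h (k+1) ≤ h k * ((K + 1) / s) := by
            have hq : h k * ((K + 1) / s) = h k - h k / s := by
              rw [hs_def]; field_simp; ring
            have e4 : h k ^ 2 / (4 * M) = 2 * (h k ^ 2 / (8 * M)) := by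
              field_simp; ring
            rw [hq]; linarith [hr, hdiv, e4]
          have hmain : (K+1) ^ (-α) * (K+1) ≤ s ^ (-α) * s := by
            have h1 : (K+1) ^ ((-α) + 1) ≤ s ^ ((-α) + 1) := by
              apply Real.rpow_le_rpow hK1pos.le (by rw [hs_def]; linarith)
              linarith
            rw [Real.rpow_add hK1pos, Real.rpow_add hs0, Real.rpow_one,
              Real.rpow_one] at h1
            exact h1
          calc h (k+1) ≤ h k * ((K + 1) / s) := step1
            _ ≤ (C * (K+1) ^ (-α)) * ((K + 1) / s) :=
                mul_le_mul_of_nonneg_right ih (by positivity)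
            _ ≤ C * s ^ (-α) := by
                rw [← mul_div_assoc, div_le_iff₀ hs0]
                calc C * (K+1) ^ (-α) * (K + 1)
                    = C * ((K+1) ^ (-α) * (K+1)) := by ring
                  _ ≤ C * (s ^ (-α) * s) :=
                      mul_le_mul_of_nonneg_left hmain hC0.le
                  _ = C * s ^ (-α) * s := by ring
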